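/- Let c = (S₂₂ − S₁₁)/(S₁₁ + S₂₂ − 2S₀) and δ = (S₂₃ − S₁₃)/(S₁₁ + S₂₂ − 2S₀) be real numbers, and suppose ν ≠ 0 satisfies the stationary-value quadratic derived by eliminating cos 2θ. If cos 2θ = c + δ/ν with θ ∈ (0, π/2) and sin 2θ ≠ 0, then the quantities E = 1/s₁₁(θ) and E* = (S₁₁ + S₂₂ − 2S₀)/(S₁₁S₂₂ − S₀²) and ν_a = −E*·s₁₃(θ*) satisfy E*/E + ν_a/ν = 2, where s₁₁(θ) and s₁₃(θ) are given by the rotation formulas s₁₁(θ) = (S₁₁S₂₂−S₀²)/(S₁₁+S₂₂−2S₀) + ¼(S₁₁+S₂₂−2S₀)(c − cos 2θ)², s₁₃(θ) = ½(S₁₃+S₂₃) − ½(S₂₃−S₁₃)cos 2θ, and ν = −s₁₃(θ)/s₁₁(θ). -/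

import Mathlib

open Real

/-- At a stationary value of the out-of-plane Poisson's ratio in a plane of
orthotropic symmetry, E*/E + ν_a/ν = 2. -/
theorem out_of_plane_stationary_relation
    (S11 S22 S12 S13 S23 S66 : ℝ) (θ ν : ℝ)
    (S0 : ℝ) (hS0 : S0 = S12 + 2 * S66)
    (hdet : S11 * S22 - S0 ^ 2 > 0)
    (htr : S11 + S22 - 2 * S0 ≠ 0)
    (hθ : θ ∈ Set.Ioo 0 (Real.pi / 2))
    (hsin : Real.sin (2 * θ) ≠ 0)
    (hν0 : ν ≠ 0)
    (c : ℝ) (hc : c = (S22 - S11) / (S11 + S22 - 2 * S0))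
    (δ : ℝ) (hδ : δ = (S23 - S13) / (S11 + S22 - 2 * S0))
    (s11θ : ℝ)
    (hs11 : s11θ = (S11 * S22 - S0 ^ 2) / (S11 + S22 - 2 * S0) +
      (1 / 4) * (S11 + S22 - 2 * S0) * (c - Real.cos (2 * θ)) ^ 2)
    (s13θ : ℝ)
    (hs13 : s13θ = (1 / 2) * (S13 + S23) - (1 / 2) * (S23 - S13) * Real.cos (2 * θ))
    (hνdef : ν = -s13θ / s11θ)
    (hstat : Real.cos (2 * θ) = c + δ / ν) :
    let Estar := (S11 + S22 - 2 * S0) / (S11 * S22 - S0 ^ 2)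
    let E := 1 / s11θ
    let νa := ((S0 - S22) * S13 + (S0 - S11) * S23) / (S11 * S22 - S0 ^ 2)
    Estar / E + νa / ν = 2 := by
  intro Estar E νa
  have hD : S11 * S22 - S0 ^ 2 ≠ 0 := ne_of_gt hdet
  have hs11ne : s11θ ≠ 0 := fun h => hν0 (by rw [hνdef, h, div_zero])
  have hν : ν * s11θ + s13θ = 0 := by rw [hνdef]; field_simp; ring
  have hcT : c * (S11 + S22 - 2 * S0) - (S22 - S11) = 0 := by
    rw [hc]; field_simp; ring
  have hdT : δ * (S11 + S22 - 2 * S0) - (S23 - S13) = 0 := by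
    rw [hδ]; field_simp; ring
  have hdn : ν * c - ν * Real.cos (2 * θ) + δ = 0 := by
    rw [hstat]; field_simp; ring
  have hs11T : s11θ * (S11 + S22 - 2 * S0) -
      ((S11 * S22 - S0 ^ 2) + (S11 + S22 - 2 * S0) ^ 2 * (c - Real.cos (2 * θ)) ^ 2 / 4) = 0 := by
    rw [hs11, add_mul, div_mul_cancel₀ _ htr]; ring
  have key : s11θ * (S11 + S22 - 2 * S0) * ν ^ 2 - (S11 * S22 - S0 ^ 2) * ν ^ 2 -
      (S11 + S22 - 2 * S0) ^ 2 * δ ^ 2 / 4 = 0 := by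
    linear_combination ν ^ 2 * hs11T +
      (S11 + S22 - 2 * S0) ^ 2 / 4 * (ν * (c - Real.cos (2 * θ)) - δ) * hdn
  have hs13' : s13θ - (S13 + S23) / 2 + (S23 - S13) * Real.cos (2 * θ) / 2 = 0 := by
    rw [hs13]; ring
  have G2 : (S11 + S22 - 2 * S0) * s11θ * ν ^ 2 +
      ((S0 - S22) * S13 + (S0 - S11) * S23) * ν - 2 * (S11 * S22 - S0 ^ 2) * ν ^ 2 = 0 := by
    linear_combination 2 * key - (S11 + S22 - 2 * S0) * ν * hν +
      (S11 + S22 - 2 * S0) * ν * hs13' +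
      ((S11 + S22 - 2 * S0) * (S23 - S13) / 2) * hdn +
      ((S11 + S22 - 2 * S0) * δ / 2) * hdT - (ν * (S23 - S13) / 2) * hcT
  have G1 : (S11 + S22 - 2 * S0) * s11θ * ν +
      ((S0 - S22) * S13 + (S0 - S11) * S23) - 2 * (S11 * S22 - S0 ^ 2) * ν = 0 := by
    apply mul_left_cancel₀ hν0
    linear_combination G2
  simp only [Estar, E, νa]
  have hrw : Estar / E + νa / ν =
      ((S11 + S22 - 2 * S0) * s11θ * ν + ((S0 - S22) * S13 + (S0 - S11) * S23)) /
        ((S11 * S22 - S0 ^ 2) * ν) := by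
    simp only [Estar, E, νa]
    field_simp
  rw [hrw, div_eq_iff (mul_ne_zero hD hν0)]
  linear_combination G1
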